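/- Let X¹ and S¹ be the vector fields on ℝ × I × ℝ (coordinates (t,u,v)) given by X¹(t,u,v) = (ξ(t,u), η(t,u), η_t + (η_u − ξ_t)v − ξ_u·v²) and S¹(t,u,v) = (1, v, Σ_{k=0}^{n} f_k(u)v^k). Then the Lie bracket [X¹ − ξ·S¹, S¹], where [Y,Z](p) := (D_pZ)(Y(p)) − (D_pY)(Z(p)) and ξ·S¹ denotes pointwise scalar multiplication by ξ(t,u), equals at every point (t,u,v) the vector (0, 0, E(t,u,v)), where E(t,u,v) = (−η_tt + f_0'·η + f_1·η_t − f_0·η_u + 2f_0·ξ_t) + (ξ_tt − 2η_tu + f_1'·η + 2f_2·η_t + f_1·ξ_t + 3f_0·ξ_u)·v + (2ξ_tu − η_uu + f_2'·η + 3f_3·η_t + f_2·η_u + 2f_1·ξ_u)·v² + (ξ_uu + f_3'·η + 4f_4·η_t + 2f_3·η_u − f_3·ξ_t + f_2·ξ_u)·v³ + Σ_{k=4}^{n−1}(f_k'·η + (k+1)f_{k+1}·η_t + (k−1)f_k·η_u + (2−k)f_k·ξ_t + (4−k)f_{k−1}·ξ_u)·v^k + (f_n'·η + (n−1)f_n·η_u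 + (2−n)f_n·ξ_t + (4−n)f_{n−1}·ξ_u)·v^n + (3−n)f_n·ξ_u·v^{n+1}, with all f_k and their derivatives evaluated at u and ξ, η and their partial derivatives at (t,u). In particular, [X¹ − ξ·S¹, S¹] = 0 if and only if E(t,u,v) = 0 for all (t,u,v). -/

import Mathlib

/-- Partial derivative in the first (time) variable. -/
noncomputable def pt (φ : ℝ → ℝ → ℝ) (t u : ℝ) : ℝ := deriv (fun s => φ s u) t

/-- Partial derivative in the second (space) variable. -/
noncomputable def pu (φ : ℝ → ℝ → ℝ) (t u : ℝ) : ℝ := deriv (fun x => φ t x) u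

/-- The expression `E(t,u,v)` from the symmetry condition. -/
noncomputable def symE (n : ℕ) (f : ℕ → ℝ → ℝ) (ξ η : ℝ → ℝ → ℝ) (t u v : ℝ) : ℝ :=
  (-(pt (pt η) t u) + deriv (f 0) u * η t u + f 1 u * pt η t u - f 0 u * pu η t u
      + 2 * f 0 u * pt ξ t u)
  + (pt (pt ξ) t u - 2 * pu (pt η) t u + deriv (f 1) u * η t u + 2 * f 2 u * pt η t u
      + f 1 u * pt ξ t u + 3 * f 0 u * pu ξ t u) * v
  + (2 * pu (pt ξ) t u - pu (pu η) t u + deriv (f 2) u * η t u + 3 * f 3 u * pt η t u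
      + f 2 u * pu η t u + 2 * f 1 u * pu ξ t u) * v ^ 2
  + (pu (pu ξ) t u + deriv (f 3) u * η t u + 4 * f 4 u * pt η t u + 2 * f 3 u * pu η t u
      - f 3 u * pt ξ t u + f 2 u * pu ξ t u) * v ^ 3
  + (∑ k ∈ Finset.Icc 4 (n - 1),
      (deriv (f k) u * η t u + ((k : ℝ) + 1) * f (k + 1) u * pt η t u
        + ((k : ℝ) - 1) * f k u * pu η t u + (2 - (k : ℝ)) * f k u * pt ξ t u
        + (4 - (k : ℝ)) * f (k - 1) u * pu ξ t u) * v ^ k)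
  + (deriv (f n) u * η t u + ((n : ℝ) - 1) * f n u * pu η t u
      + (2 - (n : ℝ)) * f n u * pt ξ t u + (4 - (n : ℝ)) * f (n - 1) u * pu ξ t u) * v ^ n
  + (3 - (n : ℝ)) * f n u * pu ξ t u * v ^ (n + 1)

/-- The first prolongation `X¹` of the vector field `ξ ∂t + η ∂u`, as a vector field on
`ℝ × ℝ × ℝ` with coordinates `(t, u, v)`. -/
noncomputable def X1fun (ξ η : ℝ → ℝ → ℝ) (p : ℝ × ℝ × ℝ) : ℝ × ℝ × ℝ :=
  (ξ p.1 p.2.1, η p.1 p.2.1,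
    pt η p.1 p.2.1 + (pu η p.1 p.2.1 - pt ξ p.1 p.2.1) * p.2.2 - pu ξ p.1 p.2.1 * p.2.2 ^ 2)

/-- The spray `S¹` of the Liénard-type equation, as a vector field on `ℝ × ℝ × ℝ`. -/
noncomputable def S1fun (n : ℕ) (f : ℕ → ℝ → ℝ) (p : ℝ × ℝ × ℝ) : ℝ × ℝ × ℝ :=
  (1, p.2.2, ∑ k ∈ Finset.range (n + 1), f k p.2.1 * p.2.2 ^ k)

/-- The Lie bracket `[Y,Z](p) = (D_p Z)(Y(p)) − (D_p Y)(Z(p))` of two vector fields. -/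
noncomputable def lieBracket (Y Z : ℝ × ℝ × ℝ → ℝ × ℝ × ℝ) (p : ℝ × ℝ × ℝ) : ℝ × ℝ × ℝ :=
  fderiv ℝ Z p (Y p) - fderiv ℝ Y p (Z p)


open Filter


noncomputable def L2 (a b : ℝ) : (ℝ × ℝ) →L[ℝ] ℝ :=
  a • ContinuousLinearMap.fst ℝ ℝ ℝ + b • ContinuousLinearMap.snd ℝ ℝ ℝ

@[simp] lemma L2_apply (a b : ℝ) (q : ℝ × ℝ) : L2 a b q = a * q.1 + b * q.2 := by
  simp [L2, mul_comm]

lemma clm_eq_L2 (L : (ℝ × ℝ) →L[ℝ] ℝ) : L = L2 (L (1,0)) (L (0,1)) := by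
  apply ContinuousLinearMap.ext
  rintro ⟨x, y⟩
  have : (x, y) = x • ((1:ℝ),(0:ℝ)) + y • ((0:ℝ),(1:ℝ)) := by simp
  rw [this, map_add, map_smul, map_smul]
  simp [mul_comm]

variable {I : Set ℝ}

lemma mem_nhds_TU (hI : IsOpen I) {t u : ℝ} (hu : u ∈ I) : (Set.univ ×ˢ I) ∈ nhds (t, u) :=
  (isOpen_univ.prod hI).mem_nhds (by simp [hu])

/-- first partials via fderiv of uncurry -/
lemma pt_eq_fderiv {g : ℝ → ℝ → ℝ} {t u : ℝ}
    (hd : DifferentiableAt ℝ (Function.uncurry g) (t, u)) :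
    pt g t u = fderiv ℝ (Function.uncurry g) (t, u) (1, 0) := by
  have h1 : HasDerivAt (fun s : ℝ => (s, u)) ((1:ℝ), (0:ℝ)) t :=
    (hasDerivAt_id t).prodMk (hasDerivAt_const t u)
  have := hd.hasFDerivAt.comp_hasDerivAt t h1
  exact this.deriv

lemma pu_eq_fderiv {g : ℝ → ℝ → ℝ} {t u : ℝ}
    (hd : DifferentiableAt ℝ (Function.uncurry g) (t, u)) :
    pu g t u = fderiv ℝ (Function.uncurry g) (t, u) (0, 1) := by
  have h1 : HasDerivAt (fun x : ℝ => (t, x)) ((0:ℝ), (1:ℝ)) u :=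
    (hasDerivAt_const u t).prodMk (hasDerivAt_id u)
  have := hd.hasFDerivAt.comp_hasDerivAt u h1
  exact this.deriv

lemma core1 (hI : IsOpen I) {g : ℝ → ℝ → ℝ} (hg : ContDiffOn ℝ 2 (Function.uncurry g) (Set.univ ×ˢ I))
    {t u : ℝ} (hu : u ∈ I) :
    HasFDerivAt (Function.uncurry g) (L2 (pt g t u) (pu g t u)) (t, u) := by
  have hd : DifferentiableAt ℝ (Function.uncurry g) (t, u) :=
    ((hg.differentiableOn (by norm_num)) _ (by simp [hu])).differentiableAt (mem_nhds_TU hI hu)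
  have := hd.hasFDerivAt
  rwa [pt_eq_fderiv hd, pu_eq_fderiv hd, ← clm_eq_L2]

lemma core2 (hI : IsOpen I) {g : ℝ → ℝ → ℝ}
    (hg : ContDiffOn ℝ 2 (Function.uncurry g) (Set.univ ×ˢ I)) {t u : ℝ} (hu : u ∈ I) :
    HasFDerivAt (fun q : ℝ × ℝ => pt g q.1 q.2) (L2 (pt (pt g) t u) (pu (pt g) t u)) (t, u) ∧
    HasFDerivAt (fun q : ℝ × ℝ => pu g q.1 q.2) (L2 (pu (pt g) t u) (pu (pu g) t u)) (t, u) := by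
  set G := Function.uncurry g with hG
  have hU : IsOpen (Set.univ ×ˢ I : Set (ℝ × ℝ)) := isOpen_univ.prod hI
  have hdiff : ∀ q : ℝ × ℝ, q.2 ∈ I → DifferentiableAt ℝ G q := fun q hq =>
    ((hg.differentiableOn (by norm_num)) q (by simp [hq])).differentiableAt
      (hU.mem_nhds (by simp [hq]))
  have hfd : ContDiffOn ℝ 1 (fderiv ℝ G) (Set.univ ×ˢ I) :=
    hg.fderiv_of_isOpen hU (by norm_num)
  have hBd : DifferentiableAt ℝ (fderiv ℝ G) (t, u) :=
    ((hfd.differentiableOn (by norm_num)) _ (by simp [hu])).differentiableAt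
      (hU.mem_nhds (by simp [hu]))
  set B := fderiv ℝ (fderiv ℝ G) (t, u) with hBdef
  have hB : HasFDerivAt (fderiv ℝ G) B (t, u) := hBd.hasFDerivAt
  have hsym : ∀ w₁ w₂ : ℝ × ℝ, B w₁ w₂ = B w₂ w₁ := by
    refine second_derivative_symmetric_of_eventually (f := G) ?_ hB
    filter_upwards [hU.mem_nhds (by simp [hu] : ((t,u) : ℝ × ℝ) ∈ Set.univ ×ˢ I)] with q hq
    exact (hdiff q (by simpa using hq.2)).hasFDerivAt
  -- the two directional-derivative functions
  have main : ∀ w : ℝ × ℝ,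
      HasFDerivAt (fun q : ℝ × ℝ => fderiv ℝ G q w)
        ((ContinuousLinearMap.apply ℝ ℝ w).comp B) (t, u) :=
    fun w => ((ContinuousLinearMap.apply ℝ ℝ w).hasFDerivAt).comp (t, u) hB
  have hpt : ∀ s x, x ∈ I → pt g s x = fderiv ℝ G (s, x) (1, 0) :=
    fun s x hx => pt_eq_fderiv (hdiff (s, x) hx)
  have hpu : ∀ s x, x ∈ I → pu g s x = fderiv ℝ G (s, x) (0, 1) :=
    fun s x hx => pu_eq_fderiv (hdiff (s, x) hx)
  have hDline : ∀ w : ℝ × ℝ,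
      deriv (fun s : ℝ => fderiv ℝ G (s, u) w) t = B (1, 0) w ∧
      deriv (fun x : ℝ => fderiv ℝ G (t, x) w) u = B (0, 1) w := by
    intro w
    constructor
    · have h1 : HasDerivAt (fun s : ℝ => (s, u)) ((1:ℝ), (0:ℝ)) t :=
        (hasDerivAt_id t).prodMk (hasDerivAt_const t u)
      have := (main w).comp_hasDerivAt t h1
      simpa [Function.comp_def] using this.deriv
    · have h1 : HasDerivAt (fun x : ℝ => (t, x)) ((0:ℝ), (1:ℝ)) u :=
        (hasDerivAt_const u t).prodMk (hasDerivAt_id u)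
      have := (main w).comp_hasDerivAt u h1
      simpa [Function.comp_def] using this.deriv
  have key : ∀ w : ℝ × ℝ,
      pt (fun s x => fderiv ℝ G (s, x) w) t u = B (1, 0) w ∧
      pu (fun s x => fderiv ℝ G (s, x) w) t u = B (0, 1) w := by
    intro w
    exact ⟨(hDline w).1, (hDline w).2⟩
  -- identify pt g, pu g with the directional derivative functions near (t,u)
  have hev : ∀ (φ : ℝ → ℝ → ℝ) (w : ℝ × ℝ), (∀ s x, x ∈ I → φ s x = fderiv ℝ G (s,x) w) →
      HasFDerivAt (fun q : ℝ × ℝ => φ q.1 q.2)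
        ((ContinuousLinearMap.apply ℝ ℝ w).comp B) (t, u) := by
    intro φ w hw
    refine (main w).congr_of_eventuallyEq ?_
    filter_upwards [hU.mem_nhds (by simp [hu] : ((t,u) : ℝ × ℝ) ∈ Set.univ ×ˢ I)] with q hq
    exact hw q.1 q.2 (by simpa using hq.2)
  have eder : ∀ (φ : ℝ → ℝ → ℝ) (w : ℝ × ℝ), (∀ s x, x ∈ I → φ s x = fderiv ℝ G (s,x) w) →
      pt φ t u = B (1,0) w ∧ pu φ t u = B (0,1) w := by
    intro φ w hw
    constructor
    · have h0 : (fun s => φ s u) = fun s => fderiv ℝ G (s, u) w :=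
        funext fun s => hw s u hu
      rw [pt, h0]
      exact (hDline w).1
    · have h0 : (fun x => φ t x) =ᶠ[nhds u] fun x => fderiv ℝ G (t, x) w := by
        filter_upwards [hI.mem_nhds hu] with x hx
        exact hw t x hx
      rw [pu, h0.deriv_eq]
      exact (hDline w).2
  have hclm : ∀ w : ℝ × ℝ, (ContinuousLinearMap.apply ℝ ℝ w).comp B
      = L2 (B (1,0) w) (B (0,1) w) := by
    intro w
    rw [clm_eq_L2 ((ContinuousLinearMap.apply ℝ ℝ w).comp B)]
    simp
  obtain ⟨hpt1, hpt2⟩ := eder (pt g) (1,0) hpt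
  obtain ⟨hpu1, hpu2⟩ := eder (pu g) (0,1) hpu
  constructor
  · have := hev (pt g) (1,0) hpt
    rwa [hclm, ← hpt1, ← hpt2] at this
  · have := hev (pu g) (0,1) hpu
    rw [hclm, ← hpu2, hsym (1,0) (0,1), ← hpt2] at this
    exact this
noncomputable def P1 : (ℝ × ℝ × ℝ) →L[ℝ] ℝ := ContinuousLinearMap.fst ℝ ℝ (ℝ × ℝ)
noncomputable def P2 : (ℝ × ℝ × ℝ) →L[ℝ] ℝ :=
  (ContinuousLinearMap.fst ℝ ℝ ℝ).comp (ContinuousLinearMap.snd ℝ ℝ (ℝ × ℝ))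
noncomputable def P3 : (ℝ × ℝ × ℝ) →L[ℝ] ℝ :=
  (ContinuousLinearMap.snd ℝ ℝ ℝ).comp (ContinuousLinearMap.snd ℝ ℝ (ℝ × ℝ))
noncomputable def piTU : (ℝ × ℝ × ℝ) →L[ℝ] ℝ × ℝ := P1.prod P2

@[simp] lemma P1_apply (p : ℝ × ℝ × ℝ) : P1 p = p.1 := rfl
@[simp] lemma P2_apply (p : ℝ × ℝ × ℝ) : P2 p = p.2.1 := rfl
@[simp] lemma P3_apply (p : ℝ × ℝ × ℝ) : P3 p = p.2.2 := rfl
@[simp] lemma piTU_apply (p : ℝ × ℝ × ℝ) : piTU p = (p.1, p.2.1) := rfl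

lemma lift3 {ψ : ℝ → ℝ → ℝ} {a b : ℝ} {t u v : ℝ}
    (h : HasFDerivAt (fun q : ℝ × ℝ => ψ q.1 q.2) (L2 a b) (t, u)) :
    HasFDerivAt (fun p : ℝ × ℝ × ℝ => ψ p.1 p.2.1) ((L2 a b).comp piTU) (t, u, v) :=
  by have := HasFDerivAt.comp (t, u, v) (h : HasFDerivAt _ _ (piTU (t, u, v))) piTU.hasFDerivAt; exact this

lemma sumSplit (n : ℕ) (hn : 4 ≤ n) (c : ℕ → ℝ) (v : ℝ) :
    ∑ k ∈ Finset.range (n+2), c k * v^k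
      = c 0 + c 1 * v + c 2 * v^2 + c 3 * v^3
        + (∑ k ∈ Finset.Icc 4 (n-1), c k * v^k) + c n * v^n + c (n+1) * v^(n+1) := by
  rw [Finset.sum_range_succ, Finset.sum_range_succ]
  have hico : Finset.Icc 4 (n-1) = Finset.Ico 4 n := by
    ext x
    simp only [Finset.mem_Icc, Finset.mem_Ico]
    omega
  rw [hico, Finset.range_eq_Ico,
    ← Finset.sum_Ico_consecutive (fun k => c k * v^k) (Nat.zero_le 4) (by omega : 4 ≤ n)]
  have h04 : ∑ k ∈ Finset.Ico 0 4, c k * v^k = c 0 + c 1 * v + c 2 * v^2 + c 3 * v^3 := by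
    rw [← Finset.range_eq_Ico]
    simp [Finset.sum_range_succ]
  rw [h04]

def mcoef (Htt Htu Huu Xtt Xtu Xuu : ℝ) : ℕ → ℝ
  | 0 => -Htt
  | 1 => Xtt - 2*Htu
  | 2 => 2*Xtu - Huu
  | 3 => Xuu
  | _ => 0

lemma mcoef_ge4 (Htt Htu Huu Xtt Xtu Xuu : ℝ) (k : ℕ) (hk : 4 ≤ k) :
    mcoef Htt Htu Huu Xtt Xtu Xuu k = 0 := by
  match k, hk with
  | (m+4), _ => rfl

noncomputable def gcoef (a a' : ℕ → ℝ) (A B C D E : ℝ) : ℕ → ℝ :=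
  fun k => a' k * A + ((k:ℝ)+1) * a (k+1) * B + ((k:ℝ)-1) * a k * C
    + (2 - (k:ℝ)) * a k * D + (if k = 0 then 0 else (4 - (k:ℝ)) * a (k-1)) * E

lemma symAlg (n : ℕ) (hn : 4 ≤ n) (a a' : ℕ → ℝ)
    (ha1 : a (n+1) = 0) (ha2 : a (n+2) = 0) (ha'1 : a' (n+1) = 0)
    (A B C D E Htt Htu Huu Xtt Xtu Xuu v : ℝ) :
    (-Htt + a' 0 * A + a 1 * B - a 0 * C + 2 * a 0 * D)
    + (Xtt - 2 * Htu + a' 1 * A + 2 * a 2 * B + a 1 * D + 3 * a 0 * E) * v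
    + (2 * Xtu - Huu + a' 2 * A + 3 * a 3 * B + a 2 * C + 2 * a 1 * E) * v ^ 2
    + (Xuu + a' 3 * A + 4 * a 4 * B + 2 * a 3 * C - a 3 * D + a 2 * E) * v ^ 3
    + (∑ k ∈ Finset.Icc 4 (n - 1),
        (a' k * A + ((k : ℝ) + 1) * a (k + 1) * B + ((k : ℝ) - 1) * a k * C
          + (2 - (k : ℝ)) * a k * D + (4 - (k : ℝ)) * a (k - 1) * E) * v ^ k)
    + (a' n * A + ((n : ℝ) - 1) * a n * C + (2 - (n : ℝ)) * a n * D
        + (4 - (n : ℝ)) * a (n - 1) * E) * v ^ n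
    + (3 - (n : ℝ)) * a n * E * v ^ (n + 1)
    = A * (∑ k ∈ Finset.range (n+1), a' k * v^k)
      + B * (∑ k ∈ Finset.range (n+1), (k:ℝ) * a k * v^(k-1))
      + (C - D) * (∑ k ∈ Finset.range (n+1), (k:ℝ) * a k * v^k)
      + (2*D - C) * (∑ k ∈ Finset.range (n+1), a k * v^k)
      + 3*E*(∑ k ∈ Finset.range (n+1), a k * v^(k+1))
      - E * (∑ k ∈ Finset.range (n+1), (k:ℝ) * a k * v^(k+1))
      + (-Htt + (Xtt - 2*Htu) * v + (2*Xtu - Huu) * v^2 + Xuu * v^3) := by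
  set m := mcoef Htt Htu Huu Xtt Xtu Xuu with hm
  set g := gcoef a a' A B C D E with hg
  have ha2' : a (n + 1 + 1) = 0 := by rw [show n+1+1 = n+2 by omega]; exact ha2
  -- Step A : the LHS is the split form of the full sum
  have key : ∑ k ∈ Finset.range (n+2), (m k + g k) * v^k
      = (-Htt + a' 0 * A + a 1 * B - a 0 * C + 2 * a 0 * D)
        + (Xtt - 2 * Htu + a' 1 * A + 2 * a 2 * B + a 1 * D + 3 * a 0 * E) * v
        + (2 * Xtu - Huu + a' 2 * A + 3 * a 3 * B + a 2 * C + 2 * a 1 * E) * v ^ 2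
        + (Xuu + a' 3 * A + 4 * a 4 * B + 2 * a 3 * C - a 3 * D + a 2 * E) * v ^ 3
        + (∑ k ∈ Finset.Icc 4 (n - 1),
            (a' k * A + ((k : ℝ) + 1) * a (k + 1) * B + ((k : ℝ) - 1) * a k * C
              + (2 - (k : ℝ)) * a k * D + (4 - (k : ℝ)) * a (k - 1) * E) * v ^ k)
        + (a' n * A + ((n : ℝ) - 1) * a n * C + (2 - (n : ℝ)) * a n * D
            + (4 - (n : ℝ)) * a (n - 1) * E) * v ^ n
        + (3 - (n : ℝ)) * a n * E * v ^ (n + 1) := by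
    rw [sumSplit n hn]
    have hc0 : m 0 + g 0 = -Htt + a' 0 * A + a 1 * B - a 0 * C + 2 * a 0 * D := by
      simp [hm, hg, mcoef, gcoef]; ring
    have hc1 : m 1 + g 1 = Xtt - 2 * Htu + a' 1 * A + 2 * a 2 * B + a 1 * D + 3 * a 0 * E := by
      simp [hm, hg, mcoef, gcoef]; ring
    have hc2 : m 2 + g 2 = 2 * Xtu - Huu + a' 2 * A + 3 * a 3 * B + a 2 * C + 2 * a 1 * E := by
      simp [hm, hg, mcoef, gcoef]; norm_num; ring
    have hc3 : m 3 + g 3 = Xuu + a' 3 * A + 4 * a 4 * B + 2 * a 3 * C - a 3 * D + a 2 * E := by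
      simp [hm, hg, mcoef, gcoef]; norm_num; ring
    have hcn : m n + g n = a' n * A + ((n : ℝ) - 1) * a n * C + (2 - (n : ℝ)) * a n * D
        + (4 - (n : ℝ)) * a (n - 1) * E := by
      rw [hm, mcoef_ge4 _ _ _ _ _ _ n hn, hg]
      simp only [gcoef, if_neg (by omega : ¬ n = 0), ha1]
      ring
    have hctop : m (n+1) + g (n+1) = (3 - (n : ℝ)) * a n * E := by
      rw [hm, mcoef_ge4 _ _ _ _ _ _ (n+1) (by omega), hg]
      simp only [gcoef, if_neg (by omega : ¬ n + 1 = 0), ha1, ha'1, ha2', Nat.add_sub_cancel]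
      push_cast
      ring
    have hIcc : ∑ k ∈ Finset.Icc 4 (n-1), (m k + g k) * v^k
        = ∑ k ∈ Finset.Icc 4 (n - 1),
            (a' k * A + ((k : ℝ) + 1) * a (k + 1) * B + ((k : ℝ) - 1) * a k * C
              + (2 - (k : ℝ)) * a k * D + (4 - (k : ℝ)) * a (k - 1) * E) * v ^ k := by
      refine Finset.sum_congr rfl (fun k hk => ?_)
      have hk4 : 4 ≤ k := (Finset.mem_Icc.mp hk).1
      rw [hm, mcoef_ge4 _ _ _ _ _ _ k hk4, hg]
      simp only [gcoef, if_neg (by omega : ¬ k = 0)]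
      ring
    rw [hc0, hc1, hc2, hc3, hcn, hctop, hIcc]
  rw [← key]
  -- Step B : compute the full sum
  have split : ∑ k ∈ Finset.range (n+2), (m k + g k) * v^k
      = (∑ k ∈ Finset.range (n+2), m k * v^k)
        + A * (∑ k ∈ Finset.range (n+2), a' k * v^k)
        + B * (∑ k ∈ Finset.range (n+2), ((k:ℝ)+1) * a (k+1) * v^k)
        + C * (∑ k ∈ Finset.range (n+2), ((k:ℝ)-1) * a k * v^k)
        + D * (∑ k ∈ Finset.range (n+2), (2-(k:ℝ)) * a k * v^k)
        + E * (∑ k ∈ Finset.range (n+2),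
            (if k = 0 then 0 else (4 - (k:ℝ)) * a (k-1)) * v^k) := by
    rw [Finset.mul_sum, Finset.mul_sum, Finset.mul_sum, Finset.mul_sum, Finset.mul_sum,
      ← Finset.sum_add_distrib, ← Finset.sum_add_distrib, ← Finset.sum_add_distrib,
      ← Finset.sum_add_distrib, ← Finset.sum_add_distrib]
    exact Finset.sum_congr rfl (fun k _ => by simp only [hg, gcoef]; ring)
  have hmsum : ∑ k ∈ Finset.range (n+2), m k * v^k
      = -Htt + (Xtt - 2*Htu) * v + (2*Xtu - Huu) * v^2 + Xuu * v^3 := by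
    rw [Finset.range_eq_Ico,
      ← Finset.sum_Ico_consecutive (fun k => m k * v^k) (Nat.zero_le 4) (by omega : 4 ≤ n+2)]
    have h2 : ∑ k ∈ Finset.Ico 4 (n+2), m k * v^k = 0 :=
      Finset.sum_eq_zero (fun k hk => by
        rw [hm, mcoef_ge4 _ _ _ _ _ _ k (Finset.mem_Ico.mp hk).1, zero_mul])
    rw [h2, ← Finset.range_eq_Ico]
    simp [Finset.sum_range_succ, hm, mcoef]
  have e1 : ∑ k ∈ Finset.range (n+2), a' k * v^k
      = ∑ k ∈ Finset.range (n+1), a' k * v^k := by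
    rw [Finset.sum_range_succ, ha'1]; ring
  have e2 : ∑ k ∈ Finset.range (n+2), ((k:ℝ)+1) * a (k+1) * v^k
      = ∑ k ∈ Finset.range (n+1), (k:ℝ) * a k * v^(k-1) := by
    rw [Finset.sum_range_succ, Finset.sum_range_succ, ha1, ha2',
      Finset.sum_range_succ' (fun k => (k:ℝ) * a k * v^(k-1)) n]
    simp only [Nat.cast_zero, zero_mul, add_zero, mul_zero]
    refine Finset.sum_congr rfl (fun k _ => ?_)
    rw [Nat.add_sub_cancel]
    push_cast
    ring
  have e3 : ∑ k ∈ Finset.range (n+2), ((k:ℝ)-1) * a k * v^k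
      = (∑ k ∈ Finset.range (n+1), (k:ℝ) * a k * v^k)
        - ∑ k ∈ Finset.range (n+1), a k * v^k := by
    rw [Finset.sum_range_succ, ha1, ← Finset.sum_sub_distrib, mul_zero, zero_mul, add_zero]
    exact Finset.sum_congr rfl (fun k _ => by ring)
  have e4 : ∑ k ∈ Finset.range (n+2), (2-(k:ℝ)) * a k * v^k
      = 2 * (∑ k ∈ Finset.range (n+1), a k * v^k)
        - ∑ k ∈ Finset.range (n+1), (k:ℝ) * a k * v^k := by
    rw [Finset.sum_range_succ, ha1, Finset.mul_sum, ← Finset.sum_sub_distrib,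
      mul_zero, zero_mul, add_zero]
    exact Finset.sum_congr rfl (fun k _ => by ring)
  have e5 : ∑ k ∈ Finset.range (n+2), (if k = 0 then 0 else (4-(k:ℝ)) * a (k-1)) * v^k
      = 3*(∑ k ∈ Finset.range (n+1), a k * v^(k+1))
        - ∑ k ∈ Finset.range (n+1), (k:ℝ) * a k * v^(k+1) := by
    rw [Finset.sum_range_succ'
      (fun k => (if k = 0 then 0 else (4-(k:ℝ)) * a (k-1)) * v^k) (n+1)]
    simp only [reduceIte, if_true, eq_self_iff_true, zero_mul, add_zero, Finset.mul_sum]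
    rw [← Finset.sum_sub_distrib]
    refine Finset.sum_congr rfl (fun k _ => ?_)
    simp only [if_neg (Nat.succ_ne_zero k), Nat.add_sub_cancel]
    push_cast
    ring
  rw [split, hmsum, e1, e2, e3, e4, e5]
  ring

lemma thirdAlg (n : ℕ) (hn : 4 ≤ n) (a a' : ℕ → ℝ)
    (ha1 : a (n+1) = 0) (ha2 : a (n+2) = 0) (ha'1 : a' (n+1) = 0)
    (A B C D E X Htt Htu Huu Xtt Xtu Xuu v : ℝ) :
    ∑ x ∈ Finset.range (n + 1),
        (a x * (↑x * v ^ (x - 1) * (B + (C - D) * v - E * v ^ 2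
            - X * ∑ x ∈ Finset.range (n + 1), a x * v ^ x)) +
          v ^ x * (a' x * (A - X * v))) -
      (Htt * 1 + Htu * v +
            ((C - D) * ∑ x ∈ Finset.range (n + 1), a x * v ^ x +
              v * (Htu * 1 + Huu * v - (Xtt * 1 + Xtu * v))) -
          (E * (((2:ℕ):ℝ) * v ^ (2 - 1) * ∑ x ∈ Finset.range (n + 1), a x * v ^ x) +
            v ^ 2 * (Xtu * 1 + Xuu * v)) -
        (X * ∑ x ∈ Finset.range (n + 1),
              (a x * (↑x * v ^ (x - 1) * ∑ x ∈ Finset.range (n + 1), a x * v ^ x)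
                + v ^ x * (a' x * v)) +
          (D * 1 + E * v) * ∑ x ∈ Finset.range (n + 1), a x * v ^ x))
    = (-Htt + a' 0 * A + a 1 * B - a 0 * C + 2 * a 0 * D)
    + (Xtt - 2 * Htu + a' 1 * A + 2 * a 2 * B + a 1 * D + 3 * a 0 * E) * v
    + (2 * Xtu - Huu + a' 2 * A + 3 * a 3 * B + a 2 * C + 2 * a 1 * E) * v ^ 2
    + (Xuu + a' 3 * A + 4 * a 4 * B + 2 * a 3 * C - a 3 * D + a 2 * E) * v ^ 3
    + (∑ k ∈ Finset.Icc 4 (n - 1),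
        (a' k * A + ((k : ℝ) + 1) * a (k + 1) * B + ((k : ℝ) - 1) * a k * C
          + (2 - (k : ℝ)) * a k * D + (4 - (k : ℝ)) * a (k - 1) * E) * v ^ k)
    + (a' n * A + ((n : ℝ) - 1) * a n * C + (2 - (n : ℝ)) * a n * D
        + (4 - (n : ℝ)) * a (n - 1) * E) * v ^ n
    + (3 - (n : ℝ)) * a n * E * v ^ (n + 1) := by
  rw [symAlg n hn a a' ha1 ha2 ha'1 A B C D E Htt Htu Huu Xtt Xtu Xuu v]
  have hsum : ∀ W Wa : ℝ, ∑ k ∈ Finset.range (n+1),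
        (a k * ((k:ℝ) * v ^ (k-1) * W) + v ^ k * (a' k * Wa))
      = (∑ k ∈ Finset.range (n+1), (k:ℝ) * a k * v^(k-1)) * W
        + (∑ k ∈ Finset.range (n+1), a' k * v^k) * Wa := by
    intro W Wa
    rw [Finset.sum_add_distrib, Finset.sum_mul, Finset.sum_mul]
    congr 1 <;> exact Finset.sum_congr rfl (fun k _ => by ring)
  rw [hsum, hsum]
  have hT3v : (∑ k ∈ Finset.range (n+1), (k:ℝ) * a k * v^(k-1)) * v
      = ∑ k ∈ Finset.range (n+1), (k:ℝ) * a k * v^k := by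
    rw [Finset.sum_mul]
    refine Finset.sum_congr rfl (fun k _ => ?_)
    rcases k with _ | k
    · simp
    · rw [Nat.add_sub_cancel]; ring
  have hT2v : (∑ k ∈ Finset.range (n+1), (k:ℝ) * a k * v^k) * v
      = ∑ k ∈ Finset.range (n+1), (k:ℝ) * a k * v^(k+1) := by
    rw [Finset.sum_mul]
    exact Finset.sum_congr rfl (fun k _ => by rw [pow_succ]; ring)
  have hFv : (∑ k ∈ Finset.range (n+1), a k * v^k) * v
      = ∑ k ∈ Finset.range (n+1), a k * v^(k+1) := by
    rw [Finset.sum_mul]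
    exact Finset.sum_congr rfl (fun k _ => by rw [pow_succ]; ring)
  norm_num
  linear_combination ((C - D) - E*v) * hT3v + (- E) * hT2v + (3*E) * hFv

theorem stmt0 (n : ℕ) (hn : 4 ≤ n) (I : Set ℝ) (hI : IsOpen I) (hIc : I.OrdConnected)
    (f : ℕ → ℝ → ℝ) (hf : ∀ k ≤ n, ContDiffOn ℝ 2 (f k) I) (hfz : ∀ k, n < k → f k = 0)
    (ξ η : ℝ → ℝ → ℝ)
    (hξ : ContDiffOn ℝ 2 (Function.uncurry ξ) (Set.univ ×ˢ I))
    (hη : ContDiffOn ℝ 2 (Function.uncurry η) (Set.univ ×ˢ I)) :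
    (∀ t v : ℝ, ∀ u ∈ I,
      lieBracket (fun p => X1fun ξ η p - ξ p.1 p.2.1 • S1fun n f p) (S1fun n f) (t, u, v)
        = ((0 : ℝ), (0 : ℝ), symE n f ξ η t u v)) ∧
    ((∀ t v : ℝ, ∀ u ∈ I,
        lieBracket (fun p => X1fun ξ η p - ξ p.1 p.2.1 • S1fun n f p) (S1fun n f) (t, u, v) = 0)
      ↔ (∀ t v : ℝ, ∀ u ∈ I, symE n f ξ η t u v = 0)) := by
  
  have main : ∀ t v : ℝ, ∀ u ∈ I,
      lieBracket (fun p => X1fun ξ η p - ξ p.1 p.2.1 • S1fun n f p) (S1fun n f) (t, u, v)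
        = ((0 : ℝ), (0 : ℝ), symE n f ξ η t u v) := by
    intro t v u hu
    have hP3 : HasFDerivAt (fun p : ℝ × ℝ × ℝ => p.2.2) P3 (t, u, v) := P3.hasFDerivAt
    have hfk : ∀ k ∈ Finset.range (n + 1),
        HasFDerivAt (fun p : ℝ × ℝ × ℝ => f k p.2.1) ((deriv (f k) u) • P2) (t, u, v) := by
      intro k hk
      have hd : HasDerivAt (f k) (deriv (f k) u) u :=
        ((((hf k (by simpa using Nat.lt_succ_iff.mp (Finset.mem_range.mp hk))).differentiableOn
          (by norm_num)) u hu).differentiableAt (hI.mem_nhds hu)).hasDerivAt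
      exact hd.comp_hasFDerivAt _ P2.hasFDerivAt
    have hvk : ∀ k : ℕ, HasFDerivAt (fun p : ℝ × ℝ × ℝ => p.2.2 ^ k)
        (((k : ℝ) * v ^ (k - 1)) • P3) (t, u, v) :=
      fun k => (hasDerivAt_pow k v).comp_hasFDerivAt _ hP3
    have hF : HasFDerivAt (fun p : ℝ × ℝ × ℝ => ∑ k ∈ Finset.range (n + 1), f k p.2.1 * p.2.2 ^ k)
        (∑ k ∈ Finset.range (n + 1),
          (f k u • (((k : ℝ) * v ^ (k - 1)) • P3) + v ^ k • ((deriv (f k) u) • P2))) (t, u, v) :=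
      HasFDerivAt.fun_sum (fun k hk => (hfk k hk).mul (hvk k))
    have hZ : HasFDerivAt (S1fun n f)
        (((0 : (ℝ × ℝ × ℝ) →L[ℝ] ℝ)).prod (P3.prod (∑ k ∈ Finset.range (n + 1),
          (f k u • (((k : ℝ) * v ^ (k - 1)) • P3 ) + v ^ k • ((deriv (f k) u) • P2))))) (t, u, v) :=
      (hasFDerivAt_const (1:ℝ) _).prodMk (hP3.prodMk hF)
    have hξ0 := lift3 (v := v) (core1 (t := t) hI hξ hu)
    have hη0 := lift3 (v := v) (core1 (t := t) hI hη hu)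
    have hξt := lift3 (v := v) (core2 (t := t) hI hξ hu).1
    have hξu := lift3 (v := v) (core2 (t := t) hI hξ hu).2
    have hηt := lift3 (v := v) (core2 (t := t) hI hη hu).1
    have hηu := lift3 (v := v) (core2 (t := t) hI hη hu).2
    have hthird := (hηt.add ((hηu.sub hξt).mul hP3)).sub (hξu.mul (hvk 2))
    have hX1 : HasFDerivAt (X1fun ξ η) _ (t, u, v) := hξ0.prodMk (hη0.prodMk hthird)
    have hY : HasFDerivAt (fun p : ℝ × ℝ × ℝ => X1fun ξ η p - ξ p.1 p.2.1 • S1fun n f p) _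
        (t, u, v) := hX1.sub (hξ0.smul hZ)
    show fderiv ℝ (S1fun n f) (t,u,v) _ - fderiv ℝ _ (t,u,v) (S1fun n f (t,u,v)) = _
    rw [hY.fderiv, hZ.fderiv]
    simp only [ContinuousLinearMap.sub_apply, ContinuousLinearMap.prod_apply,
      ContinuousLinearMap.add_apply, ContinuousLinearMap.coe_comp', Function.comp,
      ContinuousLinearMap.smul_apply, ContinuousLinearMap.coe_sum', Finset.sum_apply,
      ContinuousLinearMap.smulRight_apply, ContinuousLinearMap.zero_apply,
      piTU_apply, P1_apply, P2_apply, P3_apply, L2_apply, smul_eq_mul,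
      X1fun, S1fun, Prod.smul_mk, Prod.mk_sub_mk, Prod.mk.injEq]
    simp only [Prod.mk_sub_mk, Prod.mk_add_mk, Prod.mk.injEq]
    refine ⟨by ring, by ring, ?_⟩
    have ha1 : f (n+1) u = 0 := by rw [hfz (n+1) (by omega)]; rfl
    have ha2 : f (n+2) u = 0 := by rw [hfz (n+2) (by omega)]; rfl
    have ha'1 : deriv (f (n+1)) u = 0 := by
      rw [hfz (n+1) (by omega)]
      exact deriv_const u 0
    unfold symE
    exact thirdAlg n hn (fun k => f k u) (fun k => deriv (f k) u) ha1 ha2 ha'1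
      (η t u) (pt η t u) (pu η t u) (pt ξ t u) (pu ξ t u) (ξ t u)
      (pt (pt η) t u) (pu (pt η) t u) (pu (pu η) t u)
      (pt (pt ξ) t u) (pu (pt ξ) t u) (pu (pu ξ) t u) v
  refine ⟨main, ?_⟩
  constructor
  · intro h t v u hu
    have h2 := h t v u hu
    rw [main t v u hu] at h2
    simpa [Prod.ext_iff] using h2
  · intro h t v u hu
    rw [main t v u hu]
    simp [Prod.ext_iff, h t v u hu]
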